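/- Let (Ω, 𝓕, π) be a σ-finite measure space and let ν₀, ν₁ be probability measures with densities f₀ = dν₀/dπ, f₁ = dν₁/dπ, such that ν₁ ≪ ν₀ and ν₁(Ω) > 0. For β ≥ 0 set C_β := ∫ f₀^{1/(1+β)} f₁^{β/(1+β)} dπ and f*_β := C_β⁻¹ f₀^{1/(1+β)} f₁^{β/(1+β)}. Then f*_β(x) converges to f₁(x)/ν₁(Ω) for π-almost every x as β → ∞. -/

import Mathlib

open MeasureTheory
open scoped Classical ENNReal

/-- Kullback–Leibler divergence: `D_KL(μ, ν) = ∫ log(dμ/dν) dμ` if `μ ≪ ν` (and the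
log-likelihood ratio is integrable), and `∞` otherwise. Valued in `EReal = (-∞, ∞]`. -/
noncomputable def klDiv {Ω : Type*} [MeasurableSpace Ω] (μ ν : Measure Ω) : EReal :=
  if μ ≪ ν ∧ Integrable (llr μ ν) μ then ((∫ x, llr μ ν x ∂μ : ℝ) : EReal) else ⊤

/-- The normalizing constant `C_β = ∫ f₀^{1/(1+β)} f₁^{β/(1+β)} dπ` of the geometric mixture. -/
noncomputable def geomConst {Ω : Type*} [MeasurableSpace Ω] (π : Measure Ω)
    (f₀ f₁ : Ω → ℝ≥0∞) (β : ℝ) : ℝ≥0∞ :=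
  ∫⁻ x, f₀ x ^ (1 / (1 + β)) * f₁ x ^ (β / (1 + β)) ∂π

/-- The geometric-mixture measure `μ*_β` with `dμ*_β/dπ = C_β⁻¹ f₀^{1/(1+β)} f₁^{β/(1+β)}`. -/
noncomputable def geomMix {Ω : Type*} [MeasurableSpace Ω] (π : Measure Ω)
    (f₀ f₁ : Ω → ℝ≥0∞) (β : ℝ) : Measure Ω :=
  π.withDensity fun x => (geomConst π f₀ f₁ β)⁻¹ * (f₀ x ^ (1 / (1 + β)) * f₁ x ^ (β / (1 + β)))

open Filter in
lemma aux_e1 : Filter.Tendsto (fun β : ℝ => 1 / (1 + β)) Filter.atTop (nhds 0) := by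
  have h : Tendsto (fun β : ℝ => 1 + β) atTop atTop := by
    simpa using tendsto_atTop_add_const_left atTop (1:ℝ) (tendsto_id (α := ℝ))
  have h2 := h.inv_tendsto_atTop
  refine h2.congr fun β => ?_
  simp [one_div]

open Filter in
lemma aux_e2 : Filter.Tendsto (fun β : ℝ => β / (1 + β)) Filter.atTop (nhds 1) := by
  have h := (tendsto_const_nhds (α := ℝ) (x := (1:ℝ)) (f := atTop)).sub aux_e1
  rw [sub_zero] at h
  refine h.congr' ?_
  filter_upwards [eventually_gt_atTop (0:ℝ)] with β hβ
  have h1 : (1:ℝ) + β ≠ 0 := by positivity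
  field_simp
  ring

open Filter in
lemma aux_rpow_tendsto {x : ℝ≥0∞} (hx0 : x ≠ 0) (hxt : x ≠ ⊤) {v : ℝ → ℝ} {y : ℝ}
    (hv : Tendsto v atTop (nhds y)) :
    Tendsto (fun β => x ^ v β) atTop (nhds (x ^ y)) := by
  lift x to NNReal using hxt
  have hc0 : x ≠ 0 := by simpa using hx0
  simp_rw [← ENNReal.coe_rpow_of_ne_zero hc0]
  exact ENNReal.tendsto_coe.2 (tendsto_const_nhds.nnrpow hv (Or.inl hc0))

lemma aux_bound (a b : ℝ≥0∞) {β : ℝ} (hβ : 0 ≤ β) :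
    a ^ (1 / (1 + β)) * b ^ (β / (1 + β)) ≤ a + b := by
  have h1 : (0:ℝ) < 1 + β := by linarith
  have hp : 0 < 1 / (1 + β) := by positivity
  have hq : 0 ≤ β / (1 + β) := by positivity
  have hsum : 1 / (1 + β) + β / (1 + β) = 1 := by field_simp
  set m := max a b with hm
  rcases eq_or_ne m 0 with h0 | h0
  · have ha : a = 0 := le_antisymm (le_max_left a b |>.trans h0.le) zero_le
    have hb : b = 0 := le_antisymm (le_max_right a b |>.trans h0.le) zero_le
    rw [ha, hb, ENNReal.zero_rpow_of_pos hp, zero_mul]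
    exact zero_le
  rcases eq_or_ne m ⊤ with ht | ht
  · have : a + b = ⊤ := by
      rcases max_eq_iff.mp ht with ⟨h, _⟩ | ⟨h, _⟩ <;> simp [h]
    simp [this]
  calc a ^ (1 / (1 + β)) * b ^ (β / (1 + β))
      ≤ m ^ (1 / (1 + β)) * m ^ (β / (1 + β)) :=
        mul_le_mul' (ENNReal.rpow_le_rpow (le_max_left a b) hp.le)
          (ENNReal.rpow_le_rpow (le_max_right a b) hq)
    _ = m := by rw [← ENNReal.rpow_add _ _ h0 ht, hsum, ENNReal.rpow_one]
    _ ≤ a + b := max_le le_self_add le_add_self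

theorem stmt7 {Ω : Type*} [MeasurableSpace Ω] (π ν₀ ν₁ : Measure Ω) [SigmaFinite π]
    [IsProbabilityMeasure ν₀] [IsProbabilityMeasure ν₁]
    (f₀ f₁ : Ω → ℝ≥0∞) (hf₀ : Measurable f₀) (hf₁ : Measurable f₁)
    (hν₀ : ν₀ = π.withDensity f₀) (hν₁ : ν₁ = π.withDensity f₁)
    (h01 : ν₁ ≪ ν₀) (hν₁0 : ν₁ Set.univ ≠ 0) :
    ∀ᵐ x ∂π, Filter.Tendsto
      (fun β : ℝ => (geomConst π f₀ f₁ β)⁻¹ * (f₀ x ^ (1 / (1 + β)) * f₁ x ^ (β / (1 + β))))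
      Filter.atTop (nhds (f₁ x / ν₁ Set.univ)) := by
  have hν₁u : ν₁ Set.univ = 1 := measure_univ
  have hIf₀ : ∫⁻ x, f₀ x ∂π = 1 := by
    have h : ν₀ Set.univ = 1 := measure_univ
    rwa [hν₀, withDensity_apply _ MeasurableSet.univ, setLIntegral_univ] at h
  have hIf₁ : ∫⁻ x, f₁ x ∂π = 1 := by
    have h : ν₁ Set.univ = 1 := measure_univ
    rwa [hν₁, withDensity_apply _ MeasurableSet.univ, setLIntegral_univ] at h
  have hf₀top : ∀ᵐ x ∂π, f₀ x ≠ ⊤ := by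
    filter_upwards [ae_lt_top hf₀ (by rw [hIf₀]; exact ENNReal.one_ne_top)] with x hx
    exact hx.ne
  have hf₁top : ∀ᵐ x ∂π, f₁ x ≠ ⊤ := by
    filter_upwards [ae_lt_top hf₁ (by rw [hIf₁]; exact ENNReal.one_ne_top)] with x hx
    exact hx.ne
  have hs : MeasurableSet {x | f₀ x = 0} := hf₀ (measurableSet_singleton 0)
  have hν₀s : ν₀ {x | f₀ x = 0} = 0 := by
    rw [hν₀, withDensity_apply _ hs]
    rw [setLIntegral_congr_fun hs (fun x hx => hx)]
    simp
  have hν₁s : ν₁ {x | f₀ x = 0} = 0 := h01 hν₀s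
  have h01' : ∀ᵐ x ∂π, f₀ x = 0 → f₁ x = 0 := by
    rw [hν₁, withDensity_apply _ hs] at hν₁s
    exact (setLIntegral_eq_zero_iff hs hf₁).mp hν₁s
  have hpt : ∀ᵐ x ∂π, Filter.Tendsto
      (fun β : ℝ => f₀ x ^ (1 / (1 + β)) * f₁ x ^ (β / (1 + β)))
      Filter.atTop (nhds (f₁ x)) := by
    filter_upwards [hf₀top, hf₁top, h01'] with x h0t h1t h01x
    rcases eq_or_ne (f₁ x) 0 with h10 | h10
    · rw [h10]
      refine Filter.Tendsto.congr' ?_ tendsto_const_nhds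
      filter_upwards [Filter.eventually_gt_atTop (0:ℝ)] with β hβ
      have hq : 0 < β / (1 + β) := by positivity
      rw [ENNReal.zero_rpow_of_pos hq, mul_zero]
    · have h00 : f₀ x ≠ 0 := fun h => h10 (h01x h)
      have t1 := aux_rpow_tendsto h00 h0t aux_e1
      have t2 := aux_rpow_tendsto h10 h1t aux_e2
      rw [ENNReal.rpow_zero] at t1
      rw [ENNReal.rpow_one] at t2
      have := ENNReal.Tendsto.mul t1 (Or.inl one_ne_zero) t2 (Or.inr ENNReal.one_ne_top)
      simpa using this
  have hmeas : ∀ β : ℝ, Measurable fun x => f₀ x ^ (1 / (1 + β)) * f₁ x ^ (β / (1 + β)) :=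
    fun β => ((ENNReal.continuous_rpow_const.measurable).comp hf₀).mul
      ((ENNReal.continuous_rpow_const.measurable).comp hf₁)
  have hC : Filter.Tendsto (fun β => geomConst π f₀ f₁ β) Filter.atTop (nhds 1) := by
    have hb : ∫⁻ x, (f₀ x + f₁ x) ∂π ≠ ⊤ := by
      rw [lintegral_add_left hf₀, hIf₀, hIf₁]; simp
    have h := tendsto_lintegral_filter_of_dominated_convergence (μ := π)
      (F := fun (β : ℝ) x => f₀ x ^ (1 / (1 + β)) * f₁ x ^ (β / (1 + β))) (f := f₁)
      (fun x => f₀ x + f₁ x)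
      (Filter.Eventually.of_forall hmeas)
      (by filter_upwards [Filter.eventually_ge_atTop (0:ℝ)] with β hβ
          exact ae_of_all _ fun x => aux_bound _ _ hβ)
      hb hpt
    rw [hIf₁] at h
    exact h
  have hCinv : Filter.Tendsto (fun β => (geomConst π f₀ f₁ β)⁻¹) Filter.atTop (nhds 1) := by
    simpa using ENNReal.tendsto_inv_iff.2 hC
  filter_upwards [hpt, hf₁top] with x hx h1t
  rw [hν₁u, div_one]
  have := ENNReal.Tendsto.mul hCinv (Or.inl one_ne_zero) hx (Or.inr ENNReal.one_ne_top)
  simpa using this
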